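/- There exist absolute constants c₀, c₁, c₂, c₃ > 0 such that for every integer n ≥ c₁ the following holds with d = ⌈c₀·log n⌉. Let {ζ_{ij} : 1 ≤ i ≤ n, 1 ≤ j ≤ d} be independent random variables uniformly distributed in [−1,1] and let T_ζ : ℝᵈ → ℝⁿ be the random matrix with entries (ζ_{ij}). Then with probability at least 1 − 2·exp(−c₃·n·log n), both inf_{x ∈ S^{d−1}} ‖T_ζ x‖_∞ ≤ 1 and sup_{x ∈ S^{d−1}} ‖T_ζ x‖_∞ ≥ √(c₂·log n). -/

import Mathlib

open MeasureTheory ProbabilityTheory Real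
open scoped RealInnerProductSpace ENNReal

noncomputable section

/-- ℝⁿ with the Euclidean (ℓ₂) structure. -/
abbrev Euc (n : ℕ) := EuclideanSpace ℝ (Fin n)

/-- The standard gaussian measure on ℝⁿ (iid standard gaussian coordinates). -/
def stdGaussian (n : ℕ) : Measure (Euc n) :=
  (Measure.pi fun _ : Fin n => gaussianReal 0 1).map (MeasurableEquiv.toLp 2 (Fin n → ℝ))

/-- The dual (polar) body K° = {t : ⟨x,t⟩ ≤ 1 for all x ∈ K}. -/
def polarBody {n : ℕ} (K : Set (Euc n)) : Set (Euc n) := {t | ∀ x ∈ K, ⟪x, t⟫ ≤ 1}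

/-- A convex body: compact, convex, centrally symmetric, with nonempty interior. -/
def IsConvexBody {n : ℕ} (K : Set (Euc n)) : Prop :=
  IsCompact K ∧ Convex ℝ K ∧ K = -K ∧ (interior K).Nonempty

/-- ℓ(K) = E sup_{t ∈ K°} Σ gᵢ tᵢ for a standard gaussian vector g. -/
def ell {n : ℕ} (K : Set (Euc n)) : ℝ :=
  ∫ g, sSup ((fun t => ⟪g, t⟫) '' polarBody K) ∂ stdGaussian n

/-- The critical dimension d*(K) = (ℓ(K)/sup_{t∈K°}‖t‖₂)². -/
def dstar {n : ℕ} (K : Set (Euc n)) : ℝ :=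
  (ell K / sSup ((fun t => ‖t‖) '' polarBody K)) ^ 2

/-- ‖x‖_K = sup_{t ∈ K°} ⟨x,t⟩, the norm whose unit ball is K. -/
def normK {n : ℕ} (K : Set (Euc n)) (x : Euc n) : ℝ :=
  sSup ((fun t => ⟪x, t⟫) '' polarBody K)

variable {Ω : Type*} [MeasurableSpace Ω]

/-- The L_p norm (E|W|^p)^{1/p} of a real random variable. -/
def lpNorm (μ : Measure Ω) (p : ℝ) (W : Ω → ℝ) : ℝ := (∫ ω, |W ω| ^ p ∂μ) ^ (1 / p)

/-- A centred random vector with identity covariance. -/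
def IsIsotropic {l : ℕ} (μ : Measure Ω) (Y : Ω → Euc l) : Prop :=
  (∫ ω, Y ω ∂μ) = 0 ∧ ∀ t : Euc l, ∫ ω, ⟪Y ω, t⟫ ^ 2 ∂μ = ‖t‖ ^ 2

/-- L-subgaussian: ‖⟨Y,t⟩‖_{L_p} ≤ L √p ‖⟨Y,t⟩‖_{L₂} for all p ≥ 2. -/
def IsSubgaussian {l : ℕ} (μ : Measure Ω) (L : ℝ) (Y : Ω → Euc l) : Prop :=
  ∀ t : Euc l, ∀ p : ℝ, 2 ≤ p →
    lpNorm μ p (fun ω => ⟪Y ω, t⟫) ≤ L * Real.sqrt p * lpNorm μ 2 (fun ω => ⟪Y ω, t⟫)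

/-- L_q–L₂ norm equivalence with constant L. -/
def LqL2 {l : ℕ} (μ : Measure Ω) (q L : ℝ) (Y : Ω → Euc l) : Prop :=
  ∀ t : Euc l, lpNorm μ q (fun ω => ⟪Y ω, t⟫) ≤ L * lpNorm μ 2 (fun ω => ⟪Y ω, t⟫)

/-- Y symmetric: -Y has the same distribution as Y. -/
def IsSymmetricRV {l : ℕ} (μ : Measure Ω) (Y : Ω → Euc l) : Prop :=
  Measure.map (fun ω => -(Y ω)) μ = Measure.map Y μ

/-- Small-ball condition with constant κ₀. -/
def SmallBall {l : ℕ} (μ : Measure Ω) (κ₀ : ℝ) (Y : Ω → Euc l) : Prop :=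
  ∀ t : Euc l, μ {ω | |⟪Y ω, t⟫| ≤ κ₀ * ‖t‖} ≤ 1/1000

/-- (Ys i) are independent copies of Y: the joint law is the m-fold product of the law of Y. -/
def IIDCopies {l m : ℕ} (μ : Measure Ω) (Y : Ω → Euc l) (Ys : Fin m → Ω → Euc l) : Prop :=
  Measure.map (fun ω i => Ys i ω) μ = Measure.pi fun _ : Fin m => Measure.map Y μ

/-- (Xs i) and (Zs i) are independent copies of X and Z respectively, all mutually independent. -/
def JointIIDCopies {nd nn m : ℕ} (μ : Measure Ω) (X : Ω → Euc nd) (Z : Ω → Euc nn)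
    (Xs : Fin m → Ω → Euc nd) (Zs : Fin m → Ω → Euc nn) : Prop :=
  Measure.map (fun ω => ((fun i => Xs i ω), (fun i => Zs i ω))) μ =
    (Measure.pi fun _ : Fin m => Measure.map X μ).prod (Measure.pi fun _ : Fin m => Measure.map Z μ)

/-- The ensemble Γ = Γ₁*Γ₂* : ℝᵈ → ℝⁿ, Γx = m^{-1/2} Σᵢ ⟨Xᵢ,x⟩ Zᵢ. -/
def Gamma {nd nn m : ℕ} (Xs : Fin m → Ω → Euc nd) (Zs : Fin m → Ω → Euc nn) (ω : Ω)
    (x : Euc nd) : Euc nn :=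
  (Real.sqrt m)⁻¹ • ∑ i, ⟪Xs i ω, x⟫ • Zs i ω

/-- ‖a‖₀, the size of the support of a. -/
def suppCard {m : ℕ} (a : Fin m → ℝ) : ℕ := (Finset.univ.filter fun i => a i ≠ 0).card

/-- The event 𝒜 = 𝒜(κ₁,δ,θ). -/
def eventA {nd m : ℕ} (κ₁ δ θ : ℝ) (Xs : Fin m → Ω → Euc nd) : Set Ω :=
  {ω | (∀ v : Euc nd, ‖v‖ ≤ 1 → Real.sqrt (∑ i, ⟪Xs i ω, v⟫ ^ 2) ≤ κ₁ * Real.sqrt m) ∧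
       ∀ a : Fin m → ℝ, Real.sqrt (∑ i, (a i) ^ 2) ≤ 1 → (suppCard a : ℝ) ≤ θ * m →
         ‖∑ i, a i • Xs i ω‖ ≤ δ * Real.sqrt m}

/-- The law of a symmetric random sign. -/
def signMeasure : Measure ℝ := (2⁻¹ : ℝ≥0∞) • Measure.dirac 1 + (2⁻¹ : ℝ≥0∞) • Measure.dirac (-1)

/-- The law of m iid random signs. -/
def signPi (m : ℕ) : Measure (Fin m → ℝ) := Measure.pi fun _ => signMeasure

/-- The law of m iid standard gaussians. -/
def gaussPi (m : ℕ) : Measure (Fin m → ℝ) := Measure.pi fun _ => gaussianReal 0 1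

/-- The uniform probability measure on [-1,1]. -/
def uniformIcc : Measure ℝ := (2⁻¹ : ℝ≥0∞) • Measure.restrict volume (Set.Icc (-1) 1)

/-- The nonincreasing rearrangement of (|w i|): `decRe w i` is the (i+1)-st largest value. -/
def decRe {m : ℕ} (w : Fin m → ℝ) : Fin m → ℝ :=
  fun i => |w (Tuple.sort (fun j => |w j|) i.rev)|



lemma two_half : (2⁻¹ : ℝ≥0∞) * ENNReal.ofReal (1+1) = 1 := by
  rw [show ((1:ℝ)+1) = 2 by norm_num, ENNReal.ofReal_ofNat,
    ENNReal.inv_mul_cancel (by norm_num) (by norm_num)]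

instance : IsProbabilityMeasure uniformIcc := by
  constructor
  simp [uniformIcc, Real.volume_Icc, two_half]

lemma uIcc_small : uniformIcc {x : ℝ | |x| < 1/16} = ENNReal.ofReal (1/16) := by
  have h : {x : ℝ | |x| < 1/16} = Set.Ioo (-(1/16):ℝ) (1/16) := by
    ext x; simp [abs_lt]
  rw [uniformIcc, Measure.smul_apply, h, Measure.restrict_apply (measurableSet_Ioo)]
  rw [show Set.Ioo (-(1/16):ℝ) (1/16) ∩ Set.Icc (-1) 1 = Set.Ioo (-(1/16):ℝ) (1/16) by
    rw [Set.inter_eq_left]; intro x hx; obtain ⟨h1,h2⟩ := hx; constructor <;> linarith]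
  rw [Real.volume_Ioo, show ((1:ℝ)/16 - -(1/16)) = 2 * (1/16) by ring,
    ENNReal.ofReal_mul (by norm_num), smul_eq_mul, ← mul_assoc,
    ENNReal.ofReal_ofNat, ENNReal.inv_mul_cancel (by norm_num) (by norm_num), one_mul]

lemma uIcc_Icc : uniformIcc (Set.Icc (-1:ℝ) 1) = 1 := by
  rw [uniformIcc, Measure.smul_apply, Measure.restrict_apply measurableSet_Icc,
    Set.inter_self, Real.volume_Icc, smul_eq_mul]
  rw [show ((1:ℝ) - -1) = 1+1 by norm_num]
  exact two_half

lemma row_bound (d : ℕ) :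
    (Measure.pi fun _ : Fin d => uniformIcc) {b : Fin d → ℝ | ∑ j, (b j)^2 < (d:ℝ)/512}
      ≤ ENNReal.ofReal ((1/2:ℝ)^d) := by
  set k := (d+1)/2 with hk
  have hd2k : d ≤ 2 * k := by omega
  set C : Finset (Fin d) → Set (Fin d → ℝ) :=
    fun S => Set.pi Set.univ (fun j => if j ∈ S then {x : ℝ | |x| < 1/16} else Set.univ)
    with hC
  have hsub : {b : Fin d → ℝ | ∑ j, (b j)^2 < (d:ℝ)/512} ⊆
      ⋃ S ∈ Finset.powersetCard k (Finset.univ : Finset (Fin d)), C S := by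
    intro b hb
    simp only [Set.mem_setOf_eq] at hb
    set L := Finset.univ.filter (fun j => (1/16:ℝ) ≤ |b j|) with hL
    have hcard : (L.card : ℝ) * (1/256) ≤ ∑ j, (b j)^2 := by
      calc (L.card : ℝ) * (1/256) = ∑ _j ∈ L, (1/256 : ℝ) := by
            rw [Finset.sum_const, nsmul_eq_mul]
        _ ≤ ∑ j ∈ L, (b j)^2 := Finset.sum_le_sum (fun j hj => by
            have h16 := (Finset.mem_filter.mp hj).2
            nlinarith [sq_abs (b j)])
        _ ≤ ∑ j, (b j)^2 := Finset.sum_le_sum_of_subset_of_nonneg (Finset.subset_univ L)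
            (fun j _ _ => sq_nonneg _)
    have h2 : 2 * L.card < d := by
      by_contra h; push_neg at h
      have hdl : (d:ℝ) ≤ 2 * L.card := by exact_mod_cast h
      nlinarith
    have hcompl : k ≤ (Lᶜ).card := by
      have := Finset.card_compl L
      have hcle : L.card ≤ d := by
        simpa using Finset.card_le_card (Finset.subset_univ L)
      simp only [Finset.card_compl, Fintype.card_fin] at this ⊢
      omega
    obtain ⟨S, hS, hScard⟩ := Finset.exists_subset_card_eq hcompl
    refine Set.mem_biUnion (Finset.mem_powersetCard.mpr ⟨Finset.subset_univ S, hScard⟩) ?_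
    intro j _
    by_cases hj : j ∈ S
    · simp only [hC]; rw [if_pos hj]
      have : j ∉ L := fun hjl => (Finset.mem_compl.mp (hS hj)) hjl
      simp only [hL, Finset.mem_filter, Finset.mem_univ, true_and, not_le] at this
      exact this
    · simp [hC, hj]
  calc (Measure.pi fun _ : Fin d => uniformIcc) {b : Fin d → ℝ | ∑ j, (b j)^2 < (d:ℝ)/512}
      ≤ (Measure.pi fun _ : Fin d => uniformIcc)
          (⋃ S ∈ Finset.powersetCard k (Finset.univ : Finset (Fin d)), C S) :=
        measure_mono hsub
    _ ≤ ∑ S ∈ Finset.powersetCard k (Finset.univ : Finset (Fin d)),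
          (Measure.pi fun _ : Fin d => uniformIcc) (C S) := measure_biUnion_finset_le _ _
    _ ≤ ∑ S ∈ Finset.powersetCard k (Finset.univ : Finset (Fin d)),
          ENNReal.ofReal ((1/16 : ℝ)^k) := by
        refine Finset.sum_le_sum (fun S hS => ?_)
        have hSc : S.card = k := (Finset.mem_powersetCard.mp hS).2
        rw [hC]
        rw [Measure.pi_pi]
        have : ∀ j, uniformIcc (if j ∈ S then {x : ℝ | |x| < 1/16} else Set.univ)
            = if j ∈ S then ENNReal.ofReal (1/16) else 1 := by
          intro j; by_cases hj : j ∈ S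
          · rw [if_pos hj, if_pos hj]; exact uIcc_small
          · rw [if_neg hj, if_neg hj]; exact measure_univ
        simp only [this]
        rw [Finset.prod_ite_mem, Finset.univ_inter, Finset.prod_const, hSc,
          ← ENNReal.ofReal_pow (by norm_num)]
    _ = (Finset.powersetCard k (Finset.univ : Finset (Fin d))).card
          * ENNReal.ofReal ((1/16 : ℝ)^k) := by rw [Finset.sum_const, nsmul_eq_mul]
    _ ≤ ENNReal.ofReal ((1/2:ℝ)^d) := by
        rw [Finset.card_powersetCard, Finset.card_univ, Fintype.card_fin]
        rw [← ENNReal.ofReal_natCast, ← ENNReal.ofReal_mul (by positivity)]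
        refine ENNReal.ofReal_le_ofReal ?_
        have h1 : ((d.choose k : ℝ)) ≤ 2^d := by
          have : d.choose k ≤ 2^d := by
            rw [← Nat.sum_range_choose d]
            exact Finset.single_le_sum (f := fun m => d.choose m)
              (fun _ _ => Nat.zero_le _) (Finset.mem_range.mpr (by omega))
          exact_mod_cast this
        have h2 : ((1:ℝ)/16)^k ≤ (1/4)^d := by
          have : ((1:ℝ)/16)^k = ((1/4 : ℝ))^(2*k) := by
            rw [pow_mul]; norm_num
          rw [this]
          exact pow_le_pow_of_le_one (by norm_num) (by norm_num) hd2k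
        calc (d.choose k : ℝ) * (1/16)^k ≤ 2^d * (1/4)^d := by
              apply mul_le_mul h1 h2 (by positivity) (by positivity)
          _ = (1/2:ℝ)^d := by rw [← mul_pow]; norm_num

lemma geom_lemma (n d : ℕ) (hn : 0 < n) (hd : 0 < d) (c : ℝ) (hc : 0 < c)
    (a : Fin n → Fin d → ℝ) (hbd : ∀ i j, |a i j| ≤ 1) (hex : ∃ i, c ≤ ∑ j, (a i j)^2) :
    sInf ((fun x : Euc d => ⨆ i : Fin n, |∑ j : Fin d, a i j * x j|) '' Metric.sphere 0 1) ≤ 1 ∧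
    Real.sqrt c ≤
      sSup ((fun x : Euc d => ⨆ i : Fin n, |∑ j : Fin d, a i j * x j|) '' Metric.sphere 0 1) := by
  have : Nonempty (Fin n) := ⟨⟨0, hn⟩⟩
  set f : Euc d → ℝ := fun x => ⨆ i : Fin n, |∑ j : Fin d, a i j * x j| with hf
  have hxcoord : ∀ x : Euc d, x ∈ Metric.sphere (0 : Euc d) 1 → ∀ j, |x j| ≤ 1 := by
    intro x hx j
    have hnx : ‖x‖ = 1 := by simpa using mem_sphere_zero_iff_norm.mp hx
    have h1 : |x j| = Real.sqrt ((x j)^2) := (Real.sqrt_sq_eq_abs _).symm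
    have h2 : Real.sqrt ((x j)^2) ≤ Real.sqrt (∑ j', (x j')^2) := by
      apply Real.sqrt_le_sqrt
      exact Finset.single_le_sum (f := fun j' => (x j')^2) (fun _ _ => sq_nonneg _)
        (Finset.mem_univ j)
    have h3 : Real.sqrt (∑ j', (x j')^2) = ‖x‖ := by
      rw [EuclideanSpace.norm_eq]; simp [sq_abs]
    rw [h1]; rw [h3] at h2; rw [hnx] at h2; exact h2
  -- bounds
  have hbdd_above : BddAbove (f '' Metric.sphere 0 1) := by
    refine ⟨∑ i, ∑ j, |a i j|, ?_⟩
    rintro y ⟨x, hx, rfl⟩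
    apply ciSup_le
    intro i
    calc |∑ j, a i j * x j| ≤ ∑ j, |a i j * x j| := Finset.abs_sum_le_sum_abs _ _
      _ ≤ ∑ j, |a i j| := by
          apply Finset.sum_le_sum; intro j _
          rw [abs_mul]
          calc |a i j| * |x j| ≤ |a i j| * 1 :=
                mul_le_mul_of_nonneg_left (hxcoord x hx j) (abs_nonneg _)
            _ = |a i j| := mul_one _
      _ ≤ ∑ i', ∑ j, |a i' j| := Finset.single_le_sum
          (f := fun i' => ∑ j, |a i' j|)
          (fun _ _ => Finset.sum_nonneg fun _ _ => abs_nonneg _) (Finset.mem_univ i)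
  have hbdd_below : BddBelow (f '' Metric.sphere 0 1) := by
    refine ⟨0, ?_⟩
    rintro y ⟨x, hx, rfl⟩
    exact Real.iSup_nonneg (fun i => abs_nonneg _)
  constructor
  · -- sInf ≤ 1 via e₀
    set j0 : Fin d := ⟨0, hd⟩
    set e₀ : Euc d := EuclideanSpace.single j0 (1:ℝ) with he₀
    have hmem : e₀ ∈ Metric.sphere (0 : Euc d) 1 := by
      rw [mem_sphere_zero_iff_norm, he₀, EuclideanSpace.norm_single, norm_one]
    have hval : f e₀ ≤ 1 := by
      apply ciSup_le
      intro i
      have : ∑ j : Fin d, a i j * e₀ j = a i j0 := by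
        rw [he₀]
        simp [EuclideanSpace.single_apply, mul_ite]
      rw [this]
      exact hbd i j0
    exact le_trans (csInf_le hbdd_below ⟨e₀, hmem, rfl⟩) hval
  · obtain ⟨i₀, hi₀⟩ := hex
    set r : ℝ := Real.sqrt (∑ j, (a i₀ j)^2) with hr
    have hrpos : 0 < r := Real.sqrt_pos.mpr (lt_of_lt_of_le hc hi₀)
    have hr2 : r^2 = ∑ j, (a i₀ j)^2 := Real.sq_sqrt (Finset.sum_nonneg fun _ _ => sq_nonneg _)
    set x : Euc d := (WithLp.equiv 2 (Fin d → ℝ)).symm (fun j => a i₀ j / r) with hxdef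
    have hxapp : ∀ j, x j = a i₀ j / r := fun j => rfl
    have hxmem : x ∈ Metric.sphere (0 : Euc d) 1 := by
      rw [mem_sphere_zero_iff_norm, EuclideanSpace.norm_eq]
      have : ∑ j, ‖x j‖^2 = 1 := by
        simp only [hxapp, Real.norm_eq_abs, sq_abs, div_pow]
        rw [← Finset.sum_div, ← hr2, div_self (by positivity)]
      rw [this, Real.sqrt_one]
    have hfx : r ≤ f x := by
      have hsum : ∑ j, a i₀ j * x j = r := by
        have heq : ∀ j ∈ Finset.univ, a i₀ j * x j = (a i₀ j)^2 / r := by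
          intro j _; rw [hxapp]; ring
        rw [Finset.sum_congr rfl heq, ← Finset.sum_div, ← hr2, sq, mul_div_assoc,
          div_self hrpos.ne', mul_one]
      calc r = |∑ j, a i₀ j * x j| := by rw [hsum, abs_of_pos hrpos]
        _ ≤ f x := by
            rw [hf]
            exact le_ciSup (Finite.bddAbove_range (fun i => |∑ j, a i j * x j|)) i₀
    have hrc : Real.sqrt c ≤ r := Real.sqrt_le_sqrt hi₀
    exact le_trans (le_trans hrc hfx) (le_csSup hbdd_above ⟨x, hxmem, rfl⟩)

/-- Example: a single uniform-entry matrix is not a Dvoretzky–Milman ensemble for the cube. -/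
theorem uniform_matrix_bad_for_cube :
    ∃ c₀ c₁ c₂ c₃ : ℝ, 0 < c₀ ∧ 0 < c₁ ∧ 0 < c₂ ∧ 0 < c₃ ∧
      ∀ n : ℕ, c₁ ≤ (n : ℝ) →
      ∀ d : ℕ, d = ⌈c₀ * Real.log n⌉₊ →
      ∀ (Ω : Type) [MeasurableSpace Ω] (μ : Measure Ω), IsProbabilityMeasure μ →
      ∀ A : Ω → (Fin n → Fin d → ℝ),
        Measure.map A μ = (Measure.pi fun _ : Fin n => Measure.pi fun _ : Fin d => uniformIcc) →
        μ {ω | sInf ((fun x : Euc d => ⨆ i : Fin n, |∑ j : Fin d, A ω i j * x j|) ''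
                  Metric.sphere 0 1) ≤ 1 ∧
               Real.sqrt (c₂ * Real.log n) ≤
                 sSup ((fun x : Euc d => ⨆ i : Fin n, |∑ j : Fin d, A ω i j * x j|) ''
                  Metric.sphere 0 1)}
          ≥ ENNReal.ofReal (1 - 2 * Real.exp (-c₃ * n * Real.log n)) := by
  refine ⟨1, 3, 1/512, 1/2, one_pos, by norm_num, by norm_num, by norm_num, ?_⟩
  intro n hn d hd Ω _ μ hμ A hA
  -- basic numerology
  have hn3 : 3 ≤ n := by exact_mod_cast hn
  have hnpos : 0 < n := by omega
  have hlogn : 1 ≤ Real.log n := by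
    rw [Real.le_log_iff_exp_le (by positivity)]
    calc Real.exp 1 ≤ 3 := by linarith [Real.exp_one_lt_d9]
      _ ≤ (n:ℝ) := hn
  rw [one_mul] at hd
  have hdlog : Real.log n ≤ d := by rw [hd]; exact Nat.le_ceil _
  have hdpos : 0 < d := by rw [hd]; exact Nat.ceil_pos.mpr (by linarith)
  set ν : Measure (Fin n → Fin d → ℝ) :=
    Measure.pi fun _ : Fin n => Measure.pi fun _ : Fin d => uniformIcc with hν
  have hAmeas : AEMeasurable A μ := by
    by_contra h
    rw [Measure.map_of_not_aemeasurable h] at hA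
    have h0 := congrArg (fun m : Measure (Fin n → Fin d → ℝ) => m Set.univ) hA
    simp only [Measure.coe_zero, Pi.zero_apply, measure_univ] at h0
    exact zero_ne_one h0
  -- the good event
  set G : Set (Fin n → Fin d → ℝ) := {a | ∀ i j, |a i j| ≤ 1} with hG
  set H : Set (Fin n → Fin d → ℝ) :=
    {a | ∃ i, (1/512 : ℝ) * Real.log n ≤ ∑ j, (a i j)^2} with hH
  have hGpi : G = Set.univ.pi (fun _ : Fin n => Set.univ.pi fun _ : Fin d =>
      Set.Icc (-1:ℝ) 1) := by
    ext a
    simp only [hG, Set.mem_setOf_eq, Set.mem_pi, Set.mem_univ, Set.mem_Icc,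
      forall_const, abs_le]
  have hHcpi : Hᶜ = Set.univ.pi (fun _ : Fin n =>
      {b : Fin d → ℝ | ∑ j, (b j)^2 < (1/512 : ℝ) * Real.log n}) := by
    ext a; simp [hH, Set.mem_pi, not_le]
  have hBmeas : MeasurableSet {b : Fin d → ℝ | ∑ j, (b j)^2 < (1/512 : ℝ) * Real.log n} := by
    apply measurableSet_lt _ measurable_const
    exact Finset.measurable_sum _ fun j _ => (measurable_pi_apply j).pow_const 2
  have hGmeas : MeasurableSet G := by
    rw [hGpi]
    exact MeasurableSet.univ_pi fun _ => MeasurableSet.univ_pi fun _ => measurableSet_Icc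
  have hHmeas : MeasurableSet H := by
    rw [← compl_compl H, hHcpi]
    exact (MeasurableSet.univ_pi fun _ => hBmeas).compl
  have hEmeas : MeasurableSet (G ∩ H) := hGmeas.inter hHmeas
  -- measure of the bad event
  have hGc : ν Gᶜ = 0 := by
    have : ν G = 1 := by
      rw [hGpi, hν, Measure.pi_pi]
      simp only [Measure.pi_pi, uIcc_Icc, Finset.prod_const, one_pow]
    rw [measure_compl hGmeas (measure_ne_top _ _), this, measure_univ, tsub_self]
  have hHc : ν Hᶜ ≤ ENNReal.ofReal (Real.exp (-(1/2) * n * Real.log n)) := by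
    rw [hHcpi, hν, Measure.pi_pi]
    have hrow : (Measure.pi fun _ : Fin d => uniformIcc)
        {b : Fin d → ℝ | ∑ j, (b j)^2 < (1/512 : ℝ) * Real.log n}
        ≤ ENNReal.ofReal ((1/2:ℝ)^d) := by
      refine le_trans (measure_mono ?_) (row_bound d)
      intro b hb
      simp only [Set.mem_setOf_eq] at hb ⊢
      calc ∑ j, (b j)^2 < (1/512 : ℝ) * Real.log n := hb
        _ ≤ (d:ℝ)/512 := by linarith
    calc ∏ _i : Fin n, (Measure.pi fun _ : Fin d => uniformIcc)
          {b : Fin d → ℝ | ∑ j, (b j)^2 < (1/512 : ℝ) * Real.log n}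
        ≤ ∏ _i : Fin n, ENNReal.ofReal ((1/2:ℝ)^d) :=
          Finset.prod_le_prod' fun _ _ => hrow
      _ = ENNReal.ofReal (((1/2:ℝ)^d)^n) := by
          rw [Finset.prod_const, Finset.card_univ, Fintype.card_fin,
            ← ENNReal.ofReal_pow (by positivity)]
      _ ≤ ENNReal.ofReal (Real.exp (-(1/2) * n * Real.log n)) := by
          apply ENNReal.ofReal_le_ofReal
          have hstep : ((1/2:ℝ))^d ≤ Real.exp (-(1/2) * Real.log n) := by
            have h1 : ((1/2:ℝ))^d = Real.exp (-(d * Real.log 2)) := by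
              rw [Real.exp_neg, Real.exp_nat_mul, Real.exp_log two_pos]
              simp [div_pow]
            rw [h1]
            apply Real.exp_le_exp.mpr
            have hlog2 : (1/2:ℝ) ≤ Real.log 2 := by linarith [Real.log_two_gt_d9]
            nlinarith [hdlog, hlogn]
          calc ((1/2:ℝ)^d)^n ≤ (Real.exp (-(1/2) * Real.log n))^n :=
                pow_le_pow_left₀ (by positivity) hstep n
            _ = Real.exp (-(1/2) * n * Real.log n) := by
                rw [← Real.exp_nat_mul]; ring_nf
  have hEc : ν (G ∩ H)ᶜ ≤ ENNReal.ofReal (2 * Real.exp (-(1/2) * n * Real.log n)) := by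
    rw [Set.compl_inter]
    calc ν (Gᶜ ∪ Hᶜ) ≤ ν Gᶜ + ν Hᶜ := measure_union_le _ _
      _ ≤ 0 + ENNReal.ofReal (Real.exp (-(1/2) * n * Real.log n)) := by
          exact add_le_add (le_of_eq hGc) hHc
      _ ≤ ENNReal.ofReal (2 * Real.exp (-(1/2) * n * Real.log n)) := by
          rw [zero_add]
          apply ENNReal.ofReal_le_ofReal
          nlinarith [Real.exp_pos (-(1/2) * (n:ℝ) * Real.log n)]
  -- conclude
  have hEν : ENNReal.ofReal (1 - 2 * Real.exp (-(1/2 : ℝ) * n * Real.log n)) ≤ ν (G ∩ H) := by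
    have h1 : ν (G ∩ H) = 1 - ν (G ∩ H)ᶜ := by
      rw [← prob_compl_eq_one_sub hEmeas.compl, compl_compl]
    rw [h1]
    calc ENNReal.ofReal (1 - 2 * Real.exp (-(1/2:ℝ) * n * Real.log n))
        = 1 - ENNReal.ofReal (2 * Real.exp (-(1/2:ℝ) * n * Real.log n)) := by
          rw [ENNReal.ofReal_sub _ (by positivity), ENNReal.ofReal_one]
      _ ≤ 1 - ν (G ∩ H)ᶜ := tsub_le_tsub_left hEc 1
  have hsubset : A ⁻¹' (G ∩ H) ⊆
      {ω | sInf ((fun x : Euc d => ⨆ i : Fin n, |∑ j : Fin d, A ω i j * x j|) ''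
          Metric.sphere 0 1) ≤ 1 ∧
        Real.sqrt ((1/512 : ℝ) * Real.log n) ≤
          sSup ((fun x : Euc d => ⨆ i : Fin n, |∑ j : Fin d, A ω i j * x j|) ''
          Metric.sphere 0 1)} := by
    intro ω hω
    obtain ⟨hg, hh⟩ := hω
    exact geom_lemma n d hnpos hdpos _ (by positivity) (A ω) hg hh
  calc ENNReal.ofReal (1 - 2 * Real.exp (-(1/2:ℝ) * n * Real.log n))
      ≤ ν (G ∩ H) := hEν
    _ = μ (A ⁻¹' (G ∩ H)) := by
        rw [← hA, Measure.map_apply_of_aemeasurable hAmeas hEmeas]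
    _ ≤ _ := measure_mono hsubset

end
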